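/- Properties of the spinor-to-2-form map: for every ξ ∈ ℂ², the matrix F(ξ) is antisymmetric and satisfies ★F(ξ) = −i F(ξ) and det F(ξ) = 0; moreover F(ξ) = 0 if and only if ξ = 0; and for ξ = (1, 0) one has F(ξ) = l∧m, i.e. F(ξ)_{jk} = l_j m_k − l_k m_j where l := (1,0,0,1) and m := (0,1,i,0). -/

import Mathlib

noncomputable section

open scoped Matrix

/-- Totally antisymmetric symbol, ε_{0123} = 1. -/
def eps (a b c d : Fin 4) : ℝ :=
  ∑ σ : Equiv.Perm (Fin 4),
    if σ 0 = a ∧ σ 1 = b ∧ σ 2 = c ∧ σ 3 = d then ((Equiv.Perm.sign σ : ℤ) : ℝ) else 0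

/-- η := diag(1,−1,−1,−1). -/
def ηM : Matrix (Fin 4) (Fin 4) ℝ :=
  !![1, 0, 0, 0; 0, -1, 0, 0; 0, 0, -1, 0; 0, 0, 0, -1]

/-- Pauli matrices s₀, s₁, s₂, s₃. -/
def sP : Fin 4 → Matrix (Fin 2) (Fin 2) ℂ :=
  ![!![1, 0; 0, 1], !![0, 1; 1, 0], !![0, Complex.I; -Complex.I, 0], !![1, 0; 0, -1]]

/-- The matrix E. -/
def EM : Matrix (Fin 2) (Fin 2) ℂ := !![0, 1; -1, 0]

/-- Second-order Pauli matrices σ_{jk} := (1/2)(s_j E s_kᵀ − s_k E s_jᵀ). -/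
def sig2 (j k : Fin 4) : Matrix (Fin 2) (Fin 2) ℂ :=
  (1/2 : ℂ) • (sP j * EM * (sP k)ᵀ - sP k * EM * (sP j)ᵀ)

/-- The spinor-to-2-form map F(ξ)_{jk} := σ_{jk ab} ξ^a ξ^b. -/
def Fspin (ξ : Fin 2 → ℂ) : Matrix (Fin 4) (Fin 4) ℂ :=
  Matrix.of fun j k => ∑ a : Fin 2, ∑ b : Fin 2, sig2 j k a b * ξ a * ξ b

/-- Minkowski Hodge star of an antisymmetric complex 4×4 matrix:
(★F)_{γδ} := (1/2) η^{αμ} η^{βν} F_{μν} ε_{αβγδ}. -/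
def hodge2 (F : Matrix (Fin 4) (Fin 4) ℂ) : Matrix (Fin 4) (Fin 4) ℂ :=
  Matrix.of fun γ δ => (1/2 : ℂ) *
    ∑ α : Fin 4, ∑ β : Fin 4, ∑ μ : Fin 4, ∑ ν : Fin 4,
      (ηM α μ : ℂ) * (ηM β ν : ℂ) * F μ ν * (eps α β γ δ : ℂ)

/-- l := (1,0,0,1). -/
def lV : Fin 4 → ℂ := ![1, 0, 0, 1]

/-- m := (0,1,i,0). -/
def mV : Fin 4 → ℂ := ![0, 1, Complex.I, 0]

def epsZ (a b c d : Fin 4) : ℤ :=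
  ∑ σ : Equiv.Perm (Fin 4),
    if σ 0 = a ∧ σ 1 = b ∧ σ 2 = c ∧ σ 3 = d then (Equiv.Perm.sign σ : ℤ) else 0

def epsT : Fin 4 → Fin 4 → Fin 4 → Fin 4 → ℤ :=
![
 ![
   ![![0, 0, 0, 0],
      ![0, 0, 0, 0],
      ![0, 0, 0, 0],
      ![0, 0, 0, 0]],
   ![![0, 0, 0, 0],
      ![0, 0, 0, 0],
      ![0, 0, 0, 1],
      ![0, 0, -1, 0]],
   ![![0, 0, 0, 0],
      ![0, 0, 0, -1],
      ![0, 0, 0, 0],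
      ![0, 1, 0, 0]],
   ![![0, 0, 0, 0],
      ![0, 0, 1, 0],
      ![0, -1, 0, 0],
      ![0, 0, 0, 0]]],
 ![
   ![![0, 0, 0, 0],
      ![0, 0, 0, 0],
      ![0, 0, 0, -1],
      ![0, 0, 1, 0]],
   ![![0, 0, 0, 0],
      ![0, 0, 0, 0],
      ![0, 0, 0, 0],
      ![0, 0, 0, 0]],
   ![![0, 0, 0, 1],
      ![0, 0, 0, 0],
      ![0, 0, 0, 0],
      ![-1, 0, 0, 0]],
   ![![0, 0, -1, 0],
      ![0, 0, 0, 0],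
      ![1, 0, 0, 0],
      ![0, 0, 0, 0]]],
 ![
   ![![0, 0, 0, 0],
      ![0, 0, 0, 1],
      ![0, 0, 0, 0],
      ![0, -1, 0, 0]],
   ![![0, 0, 0, -1],
      ![0, 0, 0, 0],
      ![0, 0, 0, 0],
      ![1, 0, 0, 0]],
   ![![0, 0, 0, 0],
      ![0, 0, 0, 0],
      ![0, 0, 0, 0],
      ![0, 0, 0, 0]],
   ![![0, 1, 0, 0],
      ![-1, 0, 0, 0],
      ![0, 0, 0, 0],
      ![0, 0, 0, 0]]],
 ![
   ![![0, 0, 0, 0],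
      ![0, 0, -1, 0],
      ![0, 1, 0, 0],
      ![0, 0, 0, 0]],
   ![![0, 0, 1, 0],
      ![0, 0, 0, 0],
      ![-1, 0, 0, 0],
      ![0, 0, 0, 0]],
   ![![0, -1, 0, 0],
      ![1, 0, 0, 0],
      ![0, 0, 0, 0],
      ![0, 0, 0, 0]],
   ![![0, 0, 0, 0],
      ![0, 0, 0, 0],
      ![0, 0, 0, 0],
      ![0, 0, 0, 0]]]]

lemma epsZ_eq_epsT : ∀ a b c d, epsZ a b c d = epsT a b c d := by decide

lemma eps_eq (a b c d : Fin 4) : eps a b c d = ((epsT a b c d : ℤ) : ℝ) := by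
  rw [← epsZ_eq_epsT]
  unfold eps epsZ
  rw [Int.cast_sum]
  refine Finset.sum_congr rfl fun σ _ => ?_
  split <;> simp

set_option maxHeartbeats 1000000 in
lemma Fspin_eq (ξ : Fin 2 → ℂ) : Fspin ξ =
    !![0, ξ 0^2 - ξ 1^2, Complex.I*(ξ 0^2 + ξ 1^2), -2*(ξ 0*ξ 1);
       -(ξ 0^2 - ξ 1^2), 0, 2*Complex.I*(ξ 0*ξ 1), -(ξ 0^2 + ξ 1^2);
       -(Complex.I*(ξ 0^2 + ξ 1^2)), -(2*Complex.I*(ξ 0*ξ 1)), 0, -(Complex.I*(ξ 0^2 - ξ 1^2));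
       2*(ξ 0*ξ 1), ξ 0^2 + ξ 1^2, Complex.I*(ξ 0^2 - ξ 1^2), 0] := by
  ext j k
  fin_cases j <;> fin_cases k <;>
    · simp [Fspin, sig2, sP, EM, Matrix.mul_apply, Fin.sum_univ_two]
      try ring



set_option maxHeartbeats 4000000 in
/-- Properties of the spinor-to-2-form map: F(ξ) is antisymmetric, ★F(ξ) = −iF(ξ),
det F(ξ) = 0, F(ξ) = 0 iff ξ = 0, and F((1,0)) = l∧m. -/
theorem Fspin_properties :
    (∀ ξ : Fin 2 → ℂ,
      (Fspin ξ)ᵀ = -Fspin ξ ∧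
      hodge2 (Fspin ξ) = (-Complex.I) • Fspin ξ ∧
      (Fspin ξ).det = 0 ∧
      (Fspin ξ = 0 ↔ ξ = 0)) ∧
    Fspin ![1, 0] = Matrix.of fun j k => lV j * mV k - lV k * mV j := by
  constructor
  · intro ξ
    refine ⟨?_, ?_, ?_, ?_⟩
    · rw [Fspin_eq]
      ext j k
      fin_cases j <;> fin_cases k <;> simp <;> ring
    · ext γ δ
      fin_cases γ <;> fin_cases δ <;>
        · simp [hodge2, Fspin_eq, ηM, eps_eq, epsT, Fin.sum_univ_four,
            Matrix.vecHead, Matrix.vecTail, Function.comp]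
          try ring
          try (simp only [Complex.I_sq]; ring)
    · rw [Fspin_eq, Matrix.det_succ_row_zero]
      simp [Fin.sum_univ_succ, Matrix.det_fin_three, Fin.succAbove,
        Fin.castSucc, Fin.castAdd, Fin.castLE, Matrix.vecHead, Matrix.vecTail, Function.comp]
      ring
    · constructor
      · intro h
        rw [Fspin_eq] at h
        have e1 : ξ 0 ^ 2 - ξ 1 ^ 2 = 0 := by
          simpa using congrFun (congrFun h 0) 1
        have e2 : Complex.I * (ξ 0 ^ 2 + ξ 1 ^ 2) = 0 := by
          simpa using congrFun (congrFun h 0) 2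
        have e2' : ξ 0 ^ 2 + ξ 1 ^ 2 = 0 := by
          rcases mul_eq_zero.mp e2 with h' | h'
          · exact absurd h' Complex.I_ne_zero
          · exact h'
        have hx : ξ 0 = 0 := by
          have : ξ 0 ^ 2 = 0 := by linear_combination (e1 + e2') / 2
          exact pow_eq_zero_iff (n := 2) (by norm_num) |>.mp this
        have hy : ξ 1 = 0 := by
          have : ξ 1 ^ 2 = 0 := by linear_combination (e2' - e1) / 2
          exact pow_eq_zero_iff (n := 2) (by norm_num) |>.mp this
        funext a
        fin_cases a
        · exact hx
        · exact hy
      · rintro rfl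
        rw [Fspin_eq]
        ext j k
        fin_cases j <;> fin_cases k <;>
          simp [Matrix.vecHead, Matrix.vecTail, Function.comp]
  · rw [Fspin_eq]
    ext j k
    fin_cases j <;> fin_cases k <;> simp [lV, mV] <;> ring
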